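/- Let d > 1 be a real number, n : ℕ, and r ≥ 0 a real number. If x : Fin (n+1) → ℝ satisfies 0 ≤ x k ≤ 1 for all 0 ≤ k ≤ n and Σ_{k=0}^{n} Q l k · x k ≥ 0 for all 0 ≤ l ≤ n, then x 0 − r · x n ≥ min(((d−1)/(d+1))^n − r, 0). -/

import Mathlib

open Matrix Finset
open scoped BigOperators Kronecker ComplexOrder

noncomputable section

/-- The flip (swap) operator on `ℂ^d ⊗ ℂ^d`. -/
def Flip (d : ℕ) : Matrix (Fin d × Fin d) (Fin d × Fin d) ℂ :=
  Matrix.of fun p q => if p.1 = q.2 ∧ p.2 = q.1 then 1 else 0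

/-- Projection onto the symmetric subspace, `Π_s = (1 + F)/2`. -/
def projSym (d : ℕ) : Matrix (Fin d × Fin d) (Fin d × Fin d) ℂ :=
  (2 : ℂ)⁻¹ • (1 + Flip d)

/-- Projection onto the antisymmetric subspace, `Π_a = (1 - F)/2`. -/
def projAsym (d : ℕ) : Matrix (Fin d × Fin d) (Fin d × Fin d) ℂ :=
  (2 : ℂ)⁻¹ • (1 - Flip d)

/-- The symmetric Werner state `σ_d = (2/(d(d+1))) • Π_s`. -/
def wernerSym (d : ℕ) : Matrix (Fin d × Fin d) (Fin d × Fin d) ℂ :=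
  (2 / ((d : ℂ) * ((d : ℂ) + 1))) • projSym d

/-- The antisymmetric Werner state `α_d = (2/(d(d-1))) • Π_a`. -/
def wernerAsym (d : ℕ) : Matrix (Fin d × Fin d) (Fin d × Fin d) ℂ :=
  (2 / ((d : ℂ) * ((d : ℂ) - 1))) • projAsym d

/-- The POVM element `G_d`: diagonal, with `(i,j),(i,j)` entry `1` iff `i ≠ j`. -/
def Gmat (d : ℕ) : Matrix (Fin d × Fin d) (Fin d × Fin d) ℂ :=
  Matrix.diagonal fun p => if p.1 ≠ p.2 then 1 else 0

/-- `n`-fold tensor power of a matrix on `ℂ^d ⊗ ℂ^d`. -/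
def tpow {d : ℕ} (n : ℕ) (X : Matrix (Fin d × Fin d) (Fin d × Fin d) ℂ) :
    Matrix (Fin n → Fin d × Fin d) (Fin n → Fin d × Fin d) ℂ :=
  Matrix.of fun f g => ∏ m, X (f m) (g m)

/-- The twirled single-copy POVM element `M_d = ((d-1)/(d+1)) • Π_s + Π_a`. -/
def MdMat (d : ℕ) : Matrix (Fin d × Fin d) (Fin d × Fin d) ℂ :=
  (((d : ℂ) - 1) / ((d : ℂ) + 1)) • projSym d + projAsym d

/-- `A_k`: sum over all `k`-element subsets `S` of the copies of the tensor product with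
`Π_a` on copies in `S` and `Π_s` elsewhere. -/
def Amat (d n k : ℕ) : Matrix (Fin n → Fin d × Fin d) (Fin n → Fin d × Fin d) ℂ :=
  ∑ S ∈ Finset.powersetCard k (Finset.univ : Finset (Fin n)),
    Matrix.of fun f g => ∏ m, (if m ∈ S then projAsym d else projSym d) (f m) (g m)

/-- Partial transpose on `ℂ^d ⊗ ℂ^d`. -/
def pt {d : ℕ} (X : Matrix (Fin d × Fin d) (Fin d × Fin d) ℂ) :
    Matrix (Fin d × Fin d) (Fin d × Fin d) ℂ :=
  Matrix.of fun p q => X (p.1, q.2) (q.1, p.2)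

/-- The maximally entangled state `Φ_d`. -/
def Phi (d : ℕ) : Matrix (Fin d × Fin d) (Fin d × Fin d) ℂ :=
  Matrix.of fun p q => if p.1 = p.2 ∧ q.1 = q.2 then ((d : ℂ))⁻¹ else 0

/-- `n`-copy partial transpose. -/
def ptN {d n : ℕ} (Y : Matrix (Fin n → Fin d × Fin d) (Fin n → Fin d × Fin d) ℂ) :
    Matrix (Fin n → Fin d × Fin d) (Fin n → Fin d × Fin d) ℂ :=
  Matrix.of fun f g => Y (fun m => ((f m).1, (g m).2)) (fun m => ((g m).1, (f m).2))

/-- `T_l`: sum over all `l`-element subsets `S` of the copies of the tensor product with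
`Φ_d` on copies in `S` and `1 - Φ_d` elsewhere. -/
def Tmat (d n l : ℕ) : Matrix (Fin n → Fin d × Fin d) (Fin n → Fin d × Fin d) ℂ :=
  ∑ S ∈ Finset.powersetCard l (Finset.univ : Finset (Fin n)),
    Matrix.of fun f g => ∏ m, (if m ∈ S then Phi d else (1 - Phi d)) (f m) (g m)

/-- The matrix `Q` of the linear program: `Q l k = Σ_{j=0}^{min(l,k)}
(n−l choose k−j)(l choose j)(1−d)^j (1+d)^{l−j}`. -/
def Qmat (n : ℕ) (d : ℝ) (l k : ℕ) : ℝ :=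
  ∑ j ∈ Finset.range (min l k + 1),
    ((n - l).choose (k - j) : ℝ) * (l.choose j : ℝ) * (1 - d) ^ j * (1 + d) ^ (l - j)

/-- A PPT POVM element on the `n`-copy space: `E`, `1 - E`, `E^Γ`, `(1-E)^Γ` all PSD. -/
def IsPPTPovmElem {d n : ℕ}
    (E : Matrix (Fin n → Fin d × Fin d) (Fin n → Fin d × Fin d) ℂ) : Prop :=
  E.PosSemidef ∧ (1 - E).PosSemidef ∧ (ptN E).PosSemidef ∧ (ptN (1 - E)).PosSemidef

/-- Error probability for discriminating `σ_d^{⊗n}` (prior `p`) from `α_d^{⊗n}`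
(prior `1-p`) with the two-outcome POVM `{E, 1 - E}`. -/
def errProb (d n : ℕ) (p : ℝ)
    (E : Matrix (Fin n → Fin d × Fin d) (Fin n → Fin d × Fin d) ℂ) : ℝ :=
  ((p : ℂ) * (E * tpow n (wernerSym d)).trace
    + (1 - (p : ℂ)) * ((1 - E) * tpow n (wernerAsym d)).trace).re

/-- Separability of a bipartite matrix. -/
def IsSep {I J : Type*} [Fintype I] [Fintype J]
    (W : Matrix (I × J) (I × J) ℂ) : Prop :=
  ∃ (m : ℕ) (A : Fin m → Matrix I I ℂ) (B : Fin m → Matrix J J ℂ),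
    (∀ i, (A i).PosSemidef) ∧ (∀ i, (B i).PosSemidef) ∧ W = ∑ i, A i ⊗ₖ B i

/-- Trace norm `‖X‖₁ = Tr √(Xᴴ X)`. -/
def traceNorm {ι : Type*} [Fintype ι] [DecidableEq ι] (X : Matrix ι ι ℂ) : ℝ :=
  (((Matrix.posSemidef_conjTranspose_mul_self X).1.eigenvectorUnitary : Matrix ι ι ℂ) *
    Matrix.diagonal (((↑) : ℝ → ℂ) ∘ Real.sqrt ∘ (Matrix.posSemidef_conjTranspose_mul_self X).1.eigenvalues) *
    (star (Matrix.posSemidef_conjTranspose_mul_self X).1.eigenvectorUnitary : Matrix ι ι ℂ)).trace.re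

/-- Frobenius (Hilbert–Schmidt) norm `‖X‖₂ = √(Tr (Xᴴ X))`. -/
def frobNorm {ι : Type*} [Fintype ι] (X : Matrix ι ι ℂ) : ℝ :=
  Real.sqrt ((Xᴴ * X).trace.re)
set_option maxRecDepth 8000
open scoped Polynomial

lemma coeff_linear_pow (a b : ℝ) (l j : ℕ) :
    ((Polynomial.C a + Polynomial.C b * Polynomial.X) ^ l).coeff j
      = (l.choose j : ℝ) * b ^ j * a ^ (l - j) := by
  rw [add_comm, add_pow, Polynomial.finset_sum_coeff]
  have h : ∀ i ∈ Finset.range (l + 1),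
      ((Polynomial.C b * Polynomial.X) ^ i * Polynomial.C a ^ (l - i)
        * ((l.choose i : ℕ) : ℝ[X])).coeff j
      = (if i = j then ((l.choose i : ℝ) * b ^ i * a ^ (l - i)) else 0) := by
    intro i _
    have : (Polynomial.C b * Polynomial.X) ^ i * Polynomial.C a ^ (l - i)
        * ((l.choose i : ℕ) : ℝ[X])
        = Polynomial.C ((l.choose i : ℝ) * b ^ i * a ^ (l - i)) * Polynomial.X ^ i := by
      simp only [← Polynomial.C_eq_natCast, ← Polynomial.C_pow, mul_pow, ← Polynomial.C_mul]
      ring_nf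
      simp [mul_comm, mul_assoc, mul_left_comm]
    rw [this, Polynomial.coeff_C_mul, Polynomial.coeff_X_pow]
    by_cases hij : i = j
    · subst hij; simp
    · simp [hij, Ne.symm hij]
  rw [Finset.sum_congr rfl h, Finset.sum_ite_eq' (Finset.range (l+1)) j]
  by_cases hj : j ∈ Finset.range (l + 1)
  · simp [hj]
  · rw [if_neg hj]
    rw [Finset.mem_range, not_lt] at hj
    rw [Nat.choose_eq_zero_of_lt (by omega)]
    simp

lemma Qmat_eq_coeff (d : ℝ) (n l k : ℕ) :
    Qmat n d l k
      = (((1:ℝ[X]) + Polynomial.X) ^ (n - l)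
          * (Polynomial.C (1+d) + Polynomial.C (1-d) * Polynomial.X) ^ l).coeff k := by
  rw [Polynomial.coeff_mul, Finset.Nat.sum_antidiagonal_eq_sum_range_succ_mk,
    ← Finset.sum_range_reflect, Qmat,
    Finset.sum_subset (Finset.range_subset_range.mpr (by omega : min l k + 1 ≤ k + 1))]
  · apply Finset.sum_congr rfl
    intro j hj
    rw [Finset.mem_range] at hj
    have h1 : k + 1 - 1 - j = k - j := by omega
    have h2 : k - (k - j) = j := by omega
    rw [h1, h2, Polynomial.coeff_one_add_X_pow, coeff_linear_pow]
    ring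
  · intro j hj hj'
    rw [Finset.mem_range] at hj hj'
    have : l < j := by omega
    rw [Nat.choose_eq_zero_of_lt this]
    simp

lemma poly_id (d t : ℝ) (n : ℕ) :
    (∑ l ∈ Finset.range (n+1),
      Polynomial.C ((n.choose l : ℝ) * ((d-1)^(n-l) - (-1)^l * t^n * (1+d)^(n-l)))
        * (((1:ℝ[X]) + Polynomial.X)^(n-l)
            * (Polynomial.C (1+d) + Polynomial.C (1-d) * Polynomial.X)^l))
    = Polynomial.C ((2*d)^n) - Polynomial.C (t^n * (2*d)^n) * Polynomial.X^n := by
  set u : ℝ[X] := 1 + Polynomial.X with hu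
  set v : ℝ[X] := Polynomial.C (1+d) + Polynomial.C (1-d) * Polynomial.X with hv
  have hterm : ∀ l ∈ Finset.range (n+1),
      Polynomial.C ((n.choose l : ℝ) * ((d-1)^(n-l) - (-1)^l * t^n * (1+d)^(n-l)))
          * (u^(n-l) * v^l)
      = v^l * (Polynomial.C (d-1) * u)^(n-l) * ((n.choose l : ℕ) : ℝ[X])
        - Polynomial.C (t^n) * ((-v)^l * (Polynomial.C (1+d) * u)^(n-l)
            * ((n.choose l : ℕ) : ℝ[X])) := by
    intro l _
    rw [neg_pow v l]
    simp only [Polynomial.C_mul, Polynomial.C_sub, Polynomial.C_pow, Polynomial.C_neg,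
      Polynomial.C_1, Polynomial.C_eq_natCast, mul_pow]
    ring
  rw [Finset.sum_congr rfl hterm, Finset.sum_sub_distrib, ← Finset.mul_sum,
    ← add_pow, ← add_pow]
  have hA : v + Polynomial.C (d-1) * u = Polynomial.C (2*d) := by
    rw [hu, hv]
    simp only [map_add, map_sub, _root_.map_mul, _root_.map_one, map_ofNat]
    ring
  have hB : -v + Polynomial.C (1+d) * u = Polynomial.C (2*d) * Polynomial.X := by
    rw [hu, hv]
    simp only [map_add, map_sub, _root_.map_mul, _root_.map_one, map_ofNat]
    ring
  rw [hA, hB, mul_pow, ← Polynomial.C_pow, ← mul_assoc, ← Polynomial.C_mul]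

lemma key_id (d t : ℝ) (n k : ℕ) :
    ∑ l ∈ Finset.range (n+1),
      ((n.choose l : ℝ) * ((d-1)^(n-l) - (-1)^l * t^n * (1+d)^(n-l))) * Qmat n d l k
    = (if k = 0 then (2*d)^n else 0) - (if k = n then t^n * (2*d)^n else 0) := by
  have h := congrArg (fun p : ℝ[X] => p.coeff k) (poly_id d t n)
  simp only [Polynomial.finset_sum_coeff, Polynomial.coeff_C_mul, Polynomial.coeff_sub,
    Polynomial.coeff_C, Polynomial.coeff_X_pow] at h
  have h2 : (∑ l ∈ Finset.range (n+1),
      ((n.choose l : ℝ) * ((d-1)^(n-l) - (-1)^l * t^n * (1+d)^(n-l))) * Qmat n d l k)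
      = ∑ l ∈ Finset.range (n+1),
      ((n.choose l : ℝ) * ((d-1)^(n-l) - (-1)^l * t^n * (1+d)^(n-l)))
        * (((1:ℝ[X]) + Polynomial.X)^(n-l)
            * (Polynomial.C (1+d) + Polynomial.C (1-d) * Polynomial.X)^l).coeff k :=
    Finset.sum_congr rfl (fun l _ => by rw [Qmat_eq_coeff d n l k])
  rw [h2, h]
  by_cases hk : k = n <;> simp [hk, eq_comm] <;> ring

/-- LP feasibility bound: any feasible `x` satisfies
`x 0 − r x n ≥ min(((d−1)/(d+1))^n − r, 0)`. -/
theorem lp_feasible_bound (d : ℝ) (hd : 1 < d) (n : ℕ) (r : ℝ) (hr : 0 ≤ r)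
    (x : Fin (n + 1) → ℝ)
    (hx0 : ∀ k, 0 ≤ x k) (hx1 : ∀ k, x k ≤ 1)
    (hQ : ∀ l : Fin (n + 1), 0 ≤ ∑ k : Fin (n + 1), Qmat n d (l : ℕ) (k : ℕ) * x k) :
    x 0 - r * x (Fin.last n) ≥ min (((d - 1) / (d + 1)) ^ n - r) 0 := by
  set t : ℝ := (d - 1) / (d + 1) with ht
  have hd1 : (0:ℝ) < d - 1 := by linarith
  have hd2 : (0:ℝ) < d + 1 := by linarith
  have htnn : 0 ≤ t := le_of_lt (div_pos hd1 hd2)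
  have hcnn : ∀ l ∈ Finset.range (n+1),
      0 ≤ (n.choose l : ℝ) * ((d-1)^(n-l) - (-1)^l * t^n * (1+d)^(n-l)) := by
    intro l hl
    rw [Finset.mem_range] at hl
    apply mul_nonneg (Nat.cast_nonneg _)
    rw [sub_nonneg]
    have hA : 0 ≤ t^n * (1+d)^(n-l) :=
      mul_nonneg (pow_nonneg htnn n) (pow_nonneg (by linarith) _)
    have h1 : (-1:ℝ)^l * t^n * (1+d)^(n-l) ≤ t^n * (1+d)^(n-l) := by
      have hle : (-1:ℝ)^l ≤ 1 := by
        rcases Nat.even_or_odd l with h | h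
        · rw [h.neg_one_pow]
        · rw [h.neg_one_pow]; linarith
      calc (-1:ℝ)^l * t^n * (1+d)^(n-l) = (-1:ℝ)^l * (t^n * (1+d)^(n-l)) := by ring
        _ ≤ 1 * (t^n * (1+d)^(n-l)) := mul_le_mul_of_nonneg_right hle hA
        _ = t^n * (1+d)^(n-l) := one_mul _
    have e1 : t ^ n * (1 + d) ^ (n - l) * (d + 1) ^ l = (d - 1) ^ n := by
      have hp : (d+1)^(n-l) * (d+1)^l = (d+1)^n := by
        rw [← pow_add]; congr 1; omega
      have h1d : (1+d) = d+1 := by ring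
      rw [ht, div_pow, h1d]
      field_simp
      rw [hp]
    have e2 : (d - 1) ^ (n - l) * (d - 1) ^ l = (d - 1) ^ n := by
      rw [← pow_add]; congr 1; omega
    have hp1 : (0:ℝ) < (d+1)^l := pow_pos hd2 l
    have hp2 : (0:ℝ) < (d-1)^l := pow_pos hd1 l
    have hple : (d-1)^l ≤ (d+1)^l := pow_le_pow_left₀ (le_of_lt hd1) (by linarith) l
    have hY : (0:ℝ) ≤ (d-1)^(n-l) := pow_nonneg (by linarith) _
    have h2 : t^n * (1+d)^(n-l) ≤ (d-1)^(n-l) := by nlinarith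
    linarith
  have hmain : ∑ l ∈ Finset.range (n+1),
      ((n.choose l : ℝ) * ((d-1)^(n-l) - (-1)^l * t^n * (1+d)^(n-l)))
        * (∑ k : Fin (n+1), Qmat n d l (k : ℕ) * x k)
      = (2*d)^n * x 0 - t^n * (2*d)^n * x (Fin.last n) := by
    simp_rw [Finset.mul_sum, ← mul_assoc]
    rw [Finset.sum_comm]
    have hswap : ∀ k : Fin (n+1), ∑ l ∈ Finset.range (n+1),
        ((n.choose l : ℝ) * ((d-1)^(n-l) - (-1)^l * t^n * (1+d)^(n-l))) * Qmat n d l (k:ℕ) * x k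
        = ((if (k:ℕ) = 0 then (2*d)^n else 0)
            - (if (k:ℕ) = n then t^n * (2*d)^n else 0)) * x k := by
      intro k
      rw [← Finset.sum_mul, key_id d t n (k:ℕ)]
    rw [Finset.sum_congr rfl (fun k _ => hswap k)]
    simp only [sub_mul, ite_mul, zero_mul]
    rw [Finset.sum_sub_distrib]
    congr 1
    · rw [Finset.sum_eq_single (0 : Fin (n+1))]
      · simp
      · intro b _ hb
        have : (b:ℕ) ≠ 0 := fun h => hb (Fin.ext (by simp [h]))
        simp [this]
      · simp
    · rw [Finset.sum_eq_single (Fin.last n)]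
      · simp
      · intro b _ hb
        have : (b:ℕ) ≠ n := fun h => hb (Fin.ext (by simp [h, Fin.val_last]))
        simp [this]
      · simp
  have hge : 0 ≤ (2*d)^n * x 0 - t^n * (2*d)^n * x (Fin.last n) := by
    rw [← hmain]
    apply Finset.sum_nonneg
    intro l hl
    refine mul_nonneg (hcnn l hl) ?_
    have := hQ ⟨l, Finset.mem_range.mp hl⟩
    simpa using this
  have h2d : (0:ℝ) < (2*d)^n := pow_pos (by linarith) n
  have hx : t^n * x (Fin.last n) ≤ x 0 := by
    have hh : (2*d)^n * 0 ≤ (2*d)^n * (x 0 - t^n * x (Fin.last n)) := by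
      rw [mul_zero]; nlinarith [hge]
    have := le_of_mul_le_mul_left hh h2d
    linarith
  have htn : 0 ≤ t^n := pow_nonneg htnn n
  rcases le_total (t^n - r) 0 with h | h
  · rw [min_eq_left h]
    nlinarith [hx, hx1 (Fin.last n), hx0 (Fin.last n), hx0 0,
      mul_nonneg (by linarith : (0:ℝ) ≤ r - t^n) (by linarith [hx1 (Fin.last n)] : 0 ≤ 1 - x (Fin.last n))]
  · rw [min_eq_right h]
    nlinarith [hx, hx0 (Fin.last n),
      mul_nonneg (by linarith : (0:ℝ) ≤ t^n - r) (hx0 (Fin.last n))]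

end
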